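/- Let N be a finite nonempty set with n = |N| ≥ 1, and fix i ∈ N. For a function a : 2^N → ℝ and a client i' ∈ N define A_{i'}(a) = Σ_{C ⊆ N∖{i'}} w_n(|C|)·(a(C ∪ {i'}) − a(C)), where w_n(k) = k!·(n−k−1)!/n!. If functions a, â : 2^N → ℝ satisfy â(N) = a(N), â(C) = a(C) for every C ⊆ N with i ∉ C, and a(C) ≥ â(C) for every C ⊊ N with i ∈ C, then A_i(â) ≤ A_i(a) and Σ_{i'∈N, i'≠i} A_{i'}(â) ≥ Σ_{i'∈N, i'≠i} A_{i'}(a). -/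

import Mathlib

open Finset

/-- Shapley weight `w_n(k) = k! (n-k-1)! / n!`. -/
noncomputable def w (m k : ℕ) : ℝ :=
  (Nat.factorial k : ℝ) * (Nat.factorial (m - k - 1) : ℝ) / (Nat.factorial m : ℝ)

/-- The client-level (Truth-)Shapley value `A_{i'}(a)` computed from the
coalition utilities `a : 2^N → ℝ`. -/
noncomputable def clientShapley {ι : Type*} [Fintype ι] [DecidableEq ι]
    (a : Finset ι → ℝ) (i : ι) : ℝ :=
  ∑ C ∈ (Finset.univ.erase i).powerset,
    w (Fintype.card ι) C.card * (a (insert i C) - a C)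

lemma w_nonneg (m k : ℕ) : 0 ≤ w m k := by
  unfold w; positivity

lemma w_key (j m : ℕ) :
    ((j : ℝ) + 1) * w (j + m + 2) j = ((m : ℝ) + 1) * w (j + m + 2) (j + 1) := by
  unfold w
  have h1 : j + m + 2 - j - 1 = m + 1 := by omega
  have h2 : j + m + 2 - (j + 1) - 1 = m := by omega
  rw [h1, h2, Nat.factorial_succ (m), Nat.factorial_succ (j)]
  push_cast
  ring

lemma w_top (n : ℕ) (hn : 1 ≤ n) : (n : ℝ) * w n (n - 1) = 1 := by
  unfold w
  have h : n - (n - 1) - 1 = 0 := by omega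
  rw [h]
  have hfac : (n : ℝ) * (Nat.factorial (n - 1) : ℝ) = (Nat.factorial n : ℝ) := by
    rw [← Nat.cast_mul, Nat.mul_factorial_pred (by omega)]
  have hne : (Nat.factorial n : ℝ) ≠ 0 := by
    exact_mod_cast Nat.factorial_ne_zero n
  field_simp
  simp only [Nat.factorial_zero, Nat.cast_one, mul_one, one_mul] at *
  linarith [hfac]

lemma w_bot (n : ℕ) (hn : 1 ≤ n) : (n : ℝ) * w n 0 = 1 := by
  unfold w
  have h : n - 0 - 1 = n - 1 := by omega
  rw [h]
  have hfac : (n : ℝ) * (Nat.factorial (n - 1) : ℝ) = (Nat.factorial n : ℝ) := by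
    rw [← Nat.cast_mul, Nat.mul_factorial_pred (by omega)]
  have hne : (Nat.factorial n : ℝ) ≠ 0 := by
    exact_mod_cast Nat.factorial_ne_zero n
  field_simp
  simp only [Nat.factorial_zero, Nat.cast_one, mul_one, one_mul] at *
  linarith [hfac]

lemma powerset_erase_eq {ι : Type*} [Fintype ι] [DecidableEq ι] (i : ι) :
    (Finset.univ.erase i).powerset
      = Finset.univ.powerset.filter (fun C : Finset ι => i ∉ C) := by
  ext C
  simp [Finset.subset_erase]

lemma shapley_eff {ι : Type*} [Fintype ι] [DecidableEq ι] [Nonempty ι]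
    (a : Finset ι → ℝ) :
    ∑ i : ι, clientShapley a i = a Finset.univ - a ∅ := by
  classical
  set n := Fintype.card ι with hn
  have hn1 : 1 ≤ n := Fintype.card_pos
  -- rewrite each clientShapley as filtered powerset sum, split subtraction
  have step1 : ∑ i : ι, clientShapley a i
      = (∑ i : ι, ∑ C ∈ Finset.univ.powerset.filter (fun C : Finset ι => i ∉ C),
          w n C.card * a (insert i C))
        - (∑ i : ι, ∑ C ∈ Finset.univ.powerset.filter (fun C : Finset ι => i ∉ C),
          w n C.card * a C) := by
    rw [← Finset.sum_sub_distrib]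
    refine Finset.sum_congr rfl fun i _ => ?_
    rw [clientShapley, powerset_erase_eq, ← Finset.sum_sub_distrib]
    exact Finset.sum_congr rfl fun C _ => by ring
  -- positive part reindexed
  have hP : ∀ i : ι, ∑ C ∈ Finset.univ.powerset.filter (fun C : Finset ι => i ∉ C),
      w n C.card * a (insert i C)
      = ∑ S ∈ Finset.univ.powerset.filter (fun S : Finset ι => i ∈ S),
          w n (S.card - 1) * a S := by
    intro i
    refine Finset.sum_nbij' (fun C => insert i C) (fun S => S.erase i) ?_ ?_ ?_ ?_ ?_
    · intro C hC
      simp only [Finset.mem_filter, Finset.mem_powerset] at hC ⊢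
      exact ⟨Finset.subset_univ _, Finset.mem_insert_self _ _⟩
    · intro S hS
      simp only [Finset.mem_filter, Finset.mem_powerset] at hS ⊢
      exact ⟨Finset.subset_univ _, Finset.notMem_erase _ _⟩
    · intro C hC
      simp only [Finset.mem_filter] at hC
      exact Finset.erase_insert hC.2
    · intro S hS
      simp only [Finset.mem_filter] at hS
      exact Finset.insert_erase hS.2
    · intro C hC
      simp only [Finset.mem_filter] at hC
      rw [Finset.card_insert_of_notMem hC.2]
      simp
  -- swap sums
  have swapP : ∑ i : ι, ∑ S ∈ Finset.univ.powerset.filter (fun S : Finset ι => i ∈ S),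
      w n (S.card - 1) * a S
      = ∑ S ∈ Finset.univ.powerset, (S.card : ℝ) * (w n (S.card - 1) * a S) := by
    simp_rw [Finset.sum_filter]
    rw [Finset.sum_comm]
    refine Finset.sum_congr rfl fun S _ => ?_
    rw [← Finset.sum_filter, Finset.filter_univ_mem, Finset.sum_const, nsmul_eq_mul]
  have swapQ : ∑ i : ι, ∑ C ∈ Finset.univ.powerset.filter (fun C : Finset ι => i ∉ C),
      w n C.card * a C
      = ∑ S ∈ Finset.univ.powerset, ((n - S.card : ℕ) : ℝ) * (w n S.card * a S) := by
    simp_rw [Finset.sum_filter]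
    rw [Finset.sum_comm]
    refine Finset.sum_congr rfl fun S hS => ?_
    rw [← Finset.sum_filter, Finset.sum_const, nsmul_eq_mul]
    congr 2
    have : Finset.univ.filter (fun i : ι => i ∉ S) = Sᶜ := by
      ext x; simp [Finset.mem_compl]
    rw [this, Finset.card_compl]
  rw [step1]
  simp_rw [hP]
  rw [swapP, swapQ, ← Finset.sum_sub_distrib]
  -- coefficient analysis
  have coef : ∀ S ∈ (Finset.univ : Finset ι).powerset,
      (S.card : ℝ) * (w n (S.card - 1) * a S) - ((n - S.card : ℕ) : ℝ) * (w n S.card * a S)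
      = (if S = (Finset.univ : Finset ι) then a Finset.univ else 0)
        + (if S = (∅ : Finset ι) then -(a ∅) else 0) := by
    intro S hS
    have hcard : S.card ≤ n := by
      simpa [hn] using Finset.card_le_univ S
    by_cases hU : S = Finset.univ
    · subst hU
      have hc : (Finset.univ : Finset ι).card = n := by simp [hn]
      have hne : (Finset.univ : Finset ι) ≠ ∅ := Finset.univ_nonempty.ne_empty
      rw [hc]
      have h0 : n - n = 0 := by omega
      rw [h0]
      simp [hne, ← mul_assoc, w_top n hn1]
    · by_cases hE : S = ∅
      · subst hE
        simp [hU, ← mul_assoc, w_bot n hn1]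
      · -- proper nonempty
        have h1 : 1 ≤ S.card := Finset.card_pos.mpr (Finset.nonempty_iff_ne_empty.mpr hE)
        have h2 : S.card < n := by
          have := Finset.card_lt_card (Finset.ssubset_univ_iff.mpr hU)
          simpa [hn] using this
        set j := S.card - 1 with hj
        set m := n - S.card - 1 with hm
        have hnjm : n = j + m + 2 := by omega
        have hk : S.card = j + 1 := by omega
        have hnk : n - S.card = m + 1 := by omega
        rw [if_neg hU, if_neg hE, hnk, hk]
        have key := w_key j m
        rw [← hnjm] at key
        push_cast
        rw [← mul_assoc, ← mul_assoc, key]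
        ring
  rw [Finset.sum_congr rfl coef, Finset.sum_add_distrib,
    Finset.sum_ite_eq' _ (Finset.univ : Finset ι), Finset.sum_ite_eq' _ (∅ : Finset ι)]
  simp only [Finset.mem_powerset, Finset.subset_univ, if_pos, Finset.empty_subset]
  ring

/-- Theorem 4.5: Truth-Shapley is Bayesian incentive compatible.  Truthful
coalition utilities `a` dominate untruthful ones `ah` for client `i`'s own
value, and are dominated for the other clients' total value. -/
theorem truth_shapley_BIC {ι : Type*} [Fintype ι] [DecidableEq ι] [Nonempty ι]
    (i : ι) (a ah : Finset ι → ℝ)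
    (hfull : ah Finset.univ = a Finset.univ)
    (hnoti : ∀ C : Finset ι, i ∉ C → ah C = a C)
    (hopt : ∀ C : Finset ι, C ⊂ Finset.univ → i ∈ C → ah C ≤ a C) :
    clientShapley ah i ≤ clientShapley a i ∧
    ∑ i' ∈ Finset.univ.erase i, clientShapley a i'
      ≤ ∑ i' ∈ Finset.univ.erase i, clientShapley ah i' := by
  have h1 : clientShapley ah i ≤ clientShapley a i := by
    unfold clientShapley
    apply Finset.sum_le_sum
    intro C hC
    have hiC : i ∉ C := by
      rw [Finset.mem_powerset, Finset.subset_erase] at hC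
      exact hC.2
    rw [hnoti C hiC]
    apply mul_le_mul_of_nonneg_left _ (w_nonneg _ _)
    apply sub_le_sub_right
    by_cases hU : insert i C = Finset.univ
    · rw [hU, hfull]
    · exact hopt _ (Finset.ssubset_univ_iff.mpr hU) (Finset.mem_insert_self _ _)
  refine ⟨h1, ?_⟩
  have ea := shapley_eff a
  have eah := shapley_eff ah
  have hA := Finset.sum_erase_add Finset.univ (clientShapley a) (Finset.mem_univ i)
  have hB := Finset.sum_erase_add Finset.univ (clientShapley ah) (Finset.mem_univ i)
  have h0 : ah (∅ : Finset ι) = a ∅ := hnoti ∅ (Finset.notMem_empty i)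
  linarith
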